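/- arXiv:1611.04807 — 4 statements merged into one kernel-verified Lean document; each statement's English description precedes it below -/
import Mathlib

section
/- With the setup of the Lyapunov–Schmidt reduction, the implicit function β̄(α,ε) solving π^⊥ g(α, β̄(α,ε), ε) = 0 satisfies (∂β̄/∂ε)(α,0) = γ₁(α) where γ₁(α) = -Δ_α^{-1} π^⊥ g₁(z_α). -/
open Set

/-- The implicit function `β̄` of the Lyapunov–Schmidt reduction satisfies
`(∂β̄/∂ε)(α,0) = γ₁(α) = -Δ_α⁻¹ π^⊥ g₁(z_α)`, where
`g₁(z_α) = ∂_ε g(z_α, ε)|_{ε=0}` and `Δ_α = ∂_b π^⊥ g₀ (z_α)`. -/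
theorem implicit_function_first_derivative
    (m p k : ℕ) (hk : 1 ≤ k)
    (g : ((Fin m → ℝ) × (Fin p → ℝ)) × ℝ → (Fin m → ℝ) × (Fin p → ℝ))
    (α : Fin m → ℝ) (β : Fin p → ℝ)
    (hg : ContDiffAt ℝ (k + 1) g ((α, β), 0))
    (hg0 : g ((α, β), 0) = 0)
    (Δ : (Fin p → ℝ) →L[ℝ] (Fin p → ℝ))
    (hΔ : HasFDerivAt (fun b => (g ((α, b), 0)).2) Δ β)
    (Δinv : (Fin p → ℝ) →L[ℝ] (Fin p → ℝ))
    (hinv1 : ∀ y, Δ (Δinv y) = y) (hinv2 : ∀ y, Δinv (Δ y) = y)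
    (ε₁ : ℝ) (hε₁ : 0 < ε₁)
    (βbar : ℝ → Fin p → ℝ)
    (hbar : ∀ ε ∈ Set.Ioo (-ε₁) ε₁, (g ((α, βbar ε), ε)).2 = 0)
    (hbar0 : βbar 0 = β)
    (hbarC : ContDiffOn ℝ (k + 1) βbar (Set.Ioo (-ε₁) ε₁)) :
    HasDerivAt βbar (-(Δinv (deriv (fun ε => (g ((α, β), ε)).2) 0))) 0 := by
  have h0 : (0:ℝ) ∈ Set.Ioo (-ε₁) ε₁ := by constructor <;> simp [hε₁, neg_lt_zero]
  have hmem : Set.Ioo (-ε₁) ε₁ ∈ nhds (0:ℝ) := isOpen_Ioo.mem_nhds h0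
  -- βbar differentiable at 0
  have hbv : HasDerivAt βbar (deriv βbar 0) 0 := by
    have := (hbarC.contDiffAt hmem).differentiableAt (by
      simp)
    exact this.hasDerivAt
  set v := deriv βbar 0 with hvdef
  -- g differentiable at the point
  set D := fderiv ℝ g ((α, β), 0) with hDdef
  have hD : HasFDerivAt g D ((α, β), 0) := by
    exact (hg.differentiableAt (by
      simp)).hasFDerivAt
  -- curve ε ↦ ((α, βbar ε), ε)
  have hcurve : HasDerivAt (fun ε : ℝ => ((α, βbar ε), ε)) ((0, v), 1) 0 :=
    ((hasDerivAt_const 0 α).prodMk hbv).prodMk (hasDerivAt_id 0)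
  have hcomp : HasDerivAt (fun ε : ℝ => g ((α, βbar ε), ε)) (D ((0, v), 1)) 0 := by
    have hD' : HasFDerivAt g D ((α, βbar 0), 0) := by rw [hbar0]; exact hD
    exact HasFDerivAt.comp_hasDerivAt (f := fun ε : ℝ => ((α, βbar ε), ε)) 0 hD' hcurve
  have hF : HasDerivAt (fun ε : ℝ => (g ((α, βbar ε), ε)).2) (D ((0, v), 1)).2 0 :=
    hcomp.snd
  -- F is eventually 0, so derivative is 0
  have hF0 : HasDerivAt (fun ε : ℝ => (g ((α, βbar ε), ε)).2) 0 0 := by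
    have heq : (fun ε : ℝ => (g ((α, βbar ε), ε)).2) =ᶠ[nhds 0] fun _ => (0 : Fin p → ℝ) := by
      filter_upwards [hmem] with x hx using hbar x hx
    exact (hasDerivAt_const 0 (0 : Fin p → ℝ)).congr_of_eventuallyEq heq
  have hzero : (D ((0, v), 1)).2 = 0 := hF.unique hF0
  -- identify Δ with the partial derivative in b
  have hΔ' : ∀ w, Δ w = (D ((0, w), 0)).2 := by
    intro w
    have hj : HasFDerivAt (fun b : Fin p → ℝ => ((α, b), (0:ℝ)))
        ((((0 : (Fin p → ℝ) →L[ℝ] (Fin m → ℝ))).prod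
          (ContinuousLinearMap.id ℝ (Fin p → ℝ))).prod 0) β :=
      ((hasFDerivAt_const α β).prodMk (hasFDerivAt_id β)).prodMk (hasFDerivAt_const 0 β)
    have hc : HasFDerivAt (fun b : Fin p → ℝ => (g ((α, b), 0)).2)
        ((ContinuousLinearMap.snd ℝ (Fin m → ℝ) (Fin p → ℝ)).comp
          (D.comp ((((0 : (Fin p → ℝ) →L[ℝ] (Fin m → ℝ))).prod
            (ContinuousLinearMap.id ℝ (Fin p → ℝ))).prod 0))) β := by
      exact ((ContinuousLinearMap.snd ℝ (Fin m → ℝ) (Fin p → ℝ)).hasFDerivAt.comp β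
        (hD.comp β hj))
    have := hΔ.unique hc
    rw [this]; rfl
  -- identify the ε-partial derivative
  have hεpart : HasDerivAt (fun ε : ℝ => (g ((α, β), ε)).2) (D ((0, 0), 1)).2 0 := by
    have hcurve2 : HasDerivAt (fun ε : ℝ => (((α, β) : (Fin m → ℝ) × (Fin p → ℝ)), ε))
        ((0, 0), 1) 0 :=
      ((hasDerivAt_const 0 α).prodMk (hasDerivAt_const 0 β)).prodMk (hasDerivAt_id 0)
    exact (hD.comp_hasDerivAt 0 hcurve2).snd
  have hεderiv : deriv (fun ε : ℝ => (g ((α, β), ε)).2) 0 = (D ((0, 0), 1)).2 :=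
    hεpart.deriv
  -- linear algebra: D((0,v),1) = D((0,v),0) + D((0,0),1)
  have hsplit : (D ((0, v), 1)).2 = Δ v + (D ((0, 0), 1)).2 := by
    have : ((((0 : Fin m → ℝ), v), (1:ℝ)) : ((Fin m → ℝ) × (Fin p → ℝ)) × ℝ)
        = ((0, v), 0) + ((0, 0), 1) := by
      simp [Prod.ext_iff]
    rw [this, map_add, hΔ' v]; rfl
  have hv : v = -(Δinv (deriv (fun ε : ℝ => (g ((α, β), ε)).2) 0)) := by
    have h1 : Δ v = -(D ((0, 0), 1)).2 := by
      rw [hzero] at hsplit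
      exact eq_neg_of_add_eq_zero_left hsplit.symm
    calc v = Δinv (Δ v) := (hinv2 v).symm
      _ = -(Δinv (deriv (fun ε : ℝ => (g ((α, β), ε)).2) 0)) := by
        rw [h1, hεderiv, map_neg]
  rw [← hv]; exact hbv
end

section
/- With the setup of the Lyapunov–Schmidt reduction, the reduced function δ(α,ε) = π g(α, β̄(α,ε), ε) satisfies (∂δ/∂ε)(α,0) = f₁(α), where f₁(α) = π g₁(z_α) + (∂π g₀/∂b)(z_α) γ₁(α) and γ₁(α) = -Δ_α^{-1} π^⊥ g₁(z_α). -/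
open Set

/-- The reduced function `δ(α,ε) = π g(α, β̄(α,ε), ε)` satisfies
`(∂δ/∂ε)(α,0) = f₁(α) = π g₁(z_α) + (∂π g₀/∂b)(z_α) γ₁(α)` with
`γ₁(α) = -Δ_α⁻¹ π^⊥ g₁(z_α)`. -/
theorem reduced_function_first_derivative
    (m p k : ℕ) (hk : 1 ≤ k)
    (g : ((Fin m → ℝ) × (Fin p → ℝ)) × ℝ → (Fin m → ℝ) × (Fin p → ℝ))
    (α : Fin m → ℝ) (β : Fin p → ℝ)
    (hg : ContDiffAt ℝ (k + 1) g ((α, β), 0))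
    (hg0 : g ((α, β), 0) = 0)
    (Δ : (Fin p → ℝ) →L[ℝ] (Fin p → ℝ))
    (hΔ : HasFDerivAt (fun b => (g ((α, b), 0)).2) Δ β)
    (Δinv : (Fin p → ℝ) →L[ℝ] (Fin p → ℝ))
    (hinv1 : ∀ y, Δ (Δinv y) = y) (hinv2 : ∀ y, Δinv (Δ y) = y)
    (ε₁ : ℝ) (hε₁ : 0 < ε₁)
    (βbar : ℝ → Fin p → ℝ)
    (hbar : ∀ ε ∈ Set.Ioo (-ε₁) ε₁, (g ((α, βbar ε), ε)).2 = 0)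
    (hbar0 : βbar 0 = β)
    (hbarC : ContDiffOn ℝ (k + 1) βbar (Set.Ioo (-ε₁) ε₁))
    (γ₁ : Fin p → ℝ)
    (hγ₁ : γ₁ = -(Δinv (deriv (fun ε => (g ((α, β), ε)).2) 0))) :
    HasDerivAt (fun ε => (g ((α, βbar ε), ε)).1)
      (deriv (fun ε => (g ((α, β), ε)).1) 0 +
        (fderiv ℝ (fun b => (g ((α, b), 0)).1) β) γ₁) 0 := by
  have hone : (1 : WithTop ℕ∞) ≤ (k : WithTop ℕ∞) + 1 := le_add_self
  have hgd : DifferentiableAt ℝ g ((α, β), 0) := hg.differentiableAt (lt_of_lt_of_le zero_lt_one hone).ne'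
  set F := fderiv ℝ g ((α, β), 0) with hFdef
  have hF : HasFDerivAt g F ((α, β), 0) := hgd.hasFDerivAt
  have h0mem : (0 : ℝ) ∈ Ioo (-ε₁) ε₁ := ⟨neg_lt_zero.mpr hε₁, hε₁⟩
  have hnhds : Ioo (-ε₁) ε₁ ∈ nhds (0 : ℝ) := isOpen_Ioo.mem_nhds h0mem
  have hbd : DifferentiableAt ℝ βbar 0 :=
    (hbarC.contDiffAt hnhds).differentiableAt (lt_of_lt_of_le zero_lt_one hone).ne'
  set v := deriv βbar 0 with hvdef
  have hbv : HasDerivAt βbar v 0 := hbd.hasDerivAt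
  -- the curve ε ↦ ((α, βbar ε), ε)
  have hc : HasDerivAt (fun ε : ℝ => ((α, βbar ε), ε)) ((0, v), 1) 0 :=
    HasDerivAt.prodMk (HasDerivAt.prodMk (hasDerivAt_const 0 α) hbv) (hasDerivAt_id 0)
  have hgc : HasDerivAt (fun ε : ℝ => g ((α, βbar ε), ε)) (F ((0, v), 1)) 0 :=
    hF.comp_hasDerivAt_of_eq 0 hc (by rw [hbar0])
  -- the straight curve ε ↦ ((α, β), ε)
  have hcs : HasDerivAt (fun ε : ℝ => ((α, β), ε)) (((0 : Fin m → ℝ), (0 : Fin p → ℝ)), 1) 0 :=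
    HasDerivAt.prodMk ((hasDerivAt_const 0 (α, β))) (hasDerivAt_id 0)
  have hgs : HasDerivAt (fun ε : ℝ => g ((α, β), ε)) (F ((0, 0), 1)) 0 := by
    have h := hF.comp_hasDerivAt 0 hcs
    exact h
  have hgs1 : HasDerivAt (fun ε : ℝ => (g ((α, β), ε)).1) ((F ((0, 0), 1)).1) 0 :=
    (ContinuousLinearMap.fst ℝ (Fin m → ℝ) (Fin p → ℝ)).hasFDerivAt.comp_hasDerivAt 0 hgs
  have hgs2 : HasDerivAt (fun ε : ℝ => (g ((α, β), ε)).2) ((F ((0, 0), 1)).2) 0 :=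
    (ContinuousLinearMap.snd ℝ (Fin m → ℝ) (Fin p → ℝ)).hasFDerivAt.comp_hasDerivAt 0 hgs
  have hds1 : deriv (fun ε => (g ((α, β), ε)).1) 0 = (F ((0, 0), 1)).1 :=
    hgs1.deriv
  have hds2 : deriv (fun ε => (g ((α, β), ε)).2) 0 = (F ((0, 0), 1)).2 :=
    hgs2.deriv
  -- the map b ↦ ((α, b), 0)
  have hJ : HasFDerivAt (fun b : Fin p → ℝ => ((α, b), (0 : ℝ)))
      ((((0 : (Fin p → ℝ) →L[ℝ] (Fin m → ℝ))).prod (ContinuousLinearMap.id ℝ _)).prod 0) β :=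
    HasFDerivAt.prodMk (HasFDerivAt.prodMk (hasFDerivAt_const α β) (hasFDerivAt_id β)) (hasFDerivAt_const 0 β)
  have hcomp : HasFDerivAt (fun b => g ((α, b), 0))
      (F.comp (((((0 : (Fin p → ℝ) →L[ℝ] (Fin m → ℝ))).prod (ContinuousLinearMap.id ℝ _)).prod 0))) β :=
    hF.comp β hJ
  have hΔeq : ∀ x, Δ x = (F ((0, x), 0)).2 := by
    intro x
    have := (hcomp.snd).unique hΔ
    rw [← this]; rfl
  have hfd1 : (fderiv ℝ (fun b => (g ((α, b), 0)).1) β) γ₁ = (F ((0, γ₁), 0)).1 := by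
    rw [(hcomp.fst).fderiv]; rfl
  -- derivative of the constraint is zero
  have hzero : (F ((0, v), 1)).2 = 0 := by
    have hconstr : HasDerivAt (fun ε : ℝ => (g ((α, βbar ε), ε)).2) ((F ((0, v), 1)).2) 0 :=
      (ContinuousLinearMap.snd ℝ (Fin m → ℝ) (Fin p → ℝ)).hasFDerivAt.comp_hasDerivAt 0 hgc
    have hev : (fun ε : ℝ => (g ((α, βbar ε), ε)).2) =ᶠ[nhds (0 : ℝ)]
        (fun _ => (0 : Fin p → ℝ)) := by
      filter_upwards [hnhds] with ε hε using hbar ε hε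
    have h0 : HasDerivAt (fun ε : ℝ => (g ((α, βbar ε), ε)).2) 0 0 :=
      (hasDerivAt_const (0 : ℝ) (0 : Fin p → ℝ)).congr_of_eventuallyEq hev
    exact hconstr.unique h0
  -- split F ((0,v),1) = F ((0,v),0) + F ((0,0),1)
  have hsplit : ∀ w : Fin p → ℝ,
      F ((0, w), 1) = F ((0, w), 0) + F ((0, 0), 1) := by
    intro w
    rw [← F.map_add]
    congr 1
    simp [Prod.ext_iff]
  have hΔv : Δ v = -(F ((0, 0), 1)).2 := by
    have h2 : (F ((0, v), 0)).2 + (F ((0, 0), 1)).2 = 0 := by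
      have h := hzero
      rw [hsplit v, Prod.snd_add] at h
      exact h
    rw [hΔeq v]
    exact eq_neg_of_add_eq_zero_left h2
  have hvγ : v = γ₁ := by
    have : Δinv (Δ v) = Δinv (-(F ((0, 0), 1)).2) := by rw [hΔv]
    rw [hinv2] at this
    rw [this, hγ₁, hds2, map_neg]
  have hfinal : (F ((0, v), 1)).1 =
      deriv (fun ε => (g ((α, β), ε)).1) 0 +
        (fderiv ℝ (fun b => (g ((α, b), 0)).1) β) γ₁ := by
    rw [hds1, hfd1, hsplit v, hvγ]
    simp [Prod.fst_add, add_comm]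
  have hgc1 : HasDerivAt (fun ε : ℝ => (g ((α, βbar ε), ε)).1) ((F ((0, v), 1)).1) 0 :=
    (ContinuousLinearMap.fst ℝ (Fin m → ℝ) (Fin p → ℝ)).hasFDerivAt.comp_hasDerivAt 0 hgc
  rwa [hfinal] at hgc1
end

section
/- (Fundamental Lemma, first order) Let x(t,z,ε) be the solution of the T-periodic C² differential system x' = F₀(t,x) + ε F₁(t,x) + O(ε²) with x(0,z,ε) = z, and let Y(t,z) be a fundamental matrix of the variational equation y' = ∂_x F₀(t, x(t,z,0)) y. Then x(t,z,ε) = x(t,z,0) + ε y₁(t,z) + O(ε²), where y₁(t,z) = Y(t,z) ∫₀^t Y(s,z)^{-1} F₁(s, x(s,z,0)) ds. -/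
set_option maxHeartbeats 2000000

open Set intervalIntegral

/-- Partial derivative in the second variable of an uncurried `C²` function. -/
lemma curry_hasFDerivAt {n : ℕ} (F : ℝ → (Fin n → ℝ) → (Fin n → ℝ))
    (hF : ContDiff ℝ 2 (fun q : ℝ × (Fin n → ℝ) => F q.1 q.2)) (t : ℝ) (u : Fin n → ℝ) :
    HasFDerivAt (fun v => F t v)
      ((fderiv ℝ (fun q : ℝ × (Fin n → ℝ) => F q.1 q.2) (t, u)).comp
        (ContinuousLinearMap.inr ℝ ℝ (Fin n → ℝ))) u := by
  have h1 : HasFDerivAt (fun q : ℝ × (Fin n → ℝ) => F q.1 q.2)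
      (fderiv ℝ (fun q : ℝ × (Fin n → ℝ) => F q.1 q.2) (t, u)) (t, u) :=
    ((hF.differentiable (by norm_num)) (t, u)).hasFDerivAt
  have h2 : HasFDerivAt (fun v : Fin n → ℝ => ((t, v) : ℝ × (Fin n → ℝ)))
      (ContinuousLinearMap.inr ℝ ℝ (Fin n → ℝ)) u := hasFDerivAt_prodMk_right t u
  exact h1.comp u h2

lemma inr_norm_le {n : ℕ} : ‖ContinuousLinearMap.inr ℝ ℝ (Fin n → ℝ)‖ ≤ 1 := by
  refine ContinuousLinearMap.opNorm_le_bound _ zero_le_one (fun v => ?_)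
  simp [Prod.norm_def]

lemma prod_sub_norm {n : ℕ} (t : ℝ) (u v : Fin n → ℝ) :
    ‖((t, u) : ℝ × (Fin n → ℝ)) - (t, v)‖ = ‖u - v‖ := by
  simp [Prod.norm_def, Prod.sub_def]

/-- Fundamental Lemma to first order: the solution of
`x' = F₀(t,x) + ε F₁(t,x) + O(ε²)`, `x(0,z,ε) = z`, satisfies
`x(t,z,ε) = x(t,z,0) + ε y₁(t,z) + O(ε²)` with
`y₁(t,z) = Y(t,z) ∫₀ᵗ Y(s,z)⁻¹ F₁(s, x(s,z,0)) ds`, where `Y(·,z)` is a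
fundamental matrix of the variational equation along `x(·,z,0)`. -/
theorem fundamental_lemma_first_order
    (n : ℕ) (T : ℝ) (hT : 0 < T)
    (D : Set (Fin n → ℝ)) (hD : IsOpen D) (hDb : Bornology.IsBounded D)
    (F₀ F₁ : ℝ → (Fin n → ℝ) → (Fin n → ℝ))
    (hF₀ : ContDiff ℝ 2 (fun q : ℝ × (Fin n → ℝ) => F₀ q.1 q.2))
    (hF₁ : ContDiff ℝ 2 (fun q : ℝ × (Fin n → ℝ) => F₁ q.1 q.2))
    (hF₀p : ∀ t x, F₀ (t + T) x = F₀ t x)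
    (hF₁p : ∀ t x, F₁ (t + T) x = F₁ t x)
    (G : ℝ → (Fin n → ℝ) → ℝ → (Fin n → ℝ)) (CG : ℝ)
    (hGc : Continuous (fun q : ℝ × (Fin n → ℝ) × ℝ => G q.1 q.2.1 q.2.2))
    (hG : ∀ t x ε, ‖G t x ε‖ ≤ CG * ε ^ 2)
    (x : ℝ → (Fin n → ℝ) → ℝ → (Fin n → ℝ))
    (hx0 : ∀ z ε, x 0 z ε = z)
    (hxde : ∀ z ε t, HasDerivAt (fun s => x s z ε)
      (F₀ t (x t z ε) + ε • F₁ t (x t z ε) + G t (x t z ε) ε) t)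
    (hxsm : ∀ t z, ContDiff ℝ 2 (fun ε => x t z ε)) :
    ∀ z ∈ D, ∀ Y Yinv : ℝ → (Fin n → ℝ) →L[ℝ] (Fin n → ℝ),
      (∀ t, HasDerivAt Y ((fderiv ℝ (fun u => F₀ t u) (x t z 0)).comp (Y t)) t) →
      (∀ t, (Y t).comp (Yinv t) = ContinuousLinearMap.id ℝ (Fin n → ℝ) ∧
            (Yinv t).comp (Y t) = ContinuousLinearMap.id ℝ (Fin n → ℝ)) →
      ∃ C > (0:ℝ), ∃ ε₂ > (0:ℝ), ∀ ε : ℝ, |ε| ≤ ε₂ → ∀ t ∈ Set.Icc 0 T,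
        ‖x t z ε - x t z 0 -
            ε • (Y t) (∫ s in (0:ℝ)..t, (Yinv s) (F₁ s (x s z 0)))‖ ≤ C * ε ^ 2 := by
  intro z hz Y Yinv hY hYinv
  -- the unperturbed solution
  set x0 : ℝ → (Fin n → ℝ) := fun t => x t z 0 with hx0def
  have hCG : 0 ≤ CG := le_trans (norm_nonneg (G 0 z 1)) (by simpa using hG 0 z 1)
  have hG0 : ∀ t u, G t u 0 = 0 := by
    intro t u
    have h := hG t u 0
    simpa using norm_le_zero_iff.mp (by simpa using h)
  have hx0de : ∀ t, HasDerivAt x0 (F₀ t (x0 t)) t := by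
    intro t
    have h := hxde z 0 t
    simpa [hG0] using h
  have hx0c : Continuous x0 := by
    rw [continuous_iff_continuousAt]; exact fun t => (hx0de t).continuousAt
  -- the x-partial derivative of F₀, F₁
  set A : ℝ → (Fin n → ℝ) → ((Fin n → ℝ) →L[ℝ] (Fin n → ℝ)) := fun t u =>
    (fderiv ℝ (fun q : ℝ × (Fin n → ℝ) => F₀ q.1 q.2) (t, u)).comp
      (ContinuousLinearMap.inr ℝ ℝ (Fin n → ℝ)) with hAdef
  have hAd : ∀ t u, HasFDerivAt (fun v => F₀ t v) (A t u) u :=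
    fun t u => curry_hasFDerivAt F₀ hF₀ t u
  have hAc : Continuous (fun q : ℝ × (Fin n → ℝ) => A q.1 q.2) :=
    (hF₀.continuous_fderiv (by norm_num)).clm_comp continuous_const
  have hfd : ∀ t, fderiv ℝ (fun u => F₀ t u) (x t z 0) = A t (x0 t) :=
    fun t => (hAd t (x0 t)).fderiv
  set B : ℝ → (Fin n → ℝ) → ((Fin n → ℝ) →L[ℝ] (Fin n → ℝ)) := fun t u =>
    (fderiv ℝ (fun q : ℝ × (Fin n → ℝ) => F₁ q.1 q.2) (t, u)).comp
      (ContinuousLinearMap.inr ℝ ℝ (Fin n → ℝ)) with hBdef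
  have hBd : ∀ t u, HasFDerivAt (fun v => F₁ t v) (B t u) u :=
    fun t u => curry_hasFDerivAt F₁ hF₁ t u
  have hBc : Continuous (fun q : ℝ × (Fin n → ℝ) => B q.1 q.2) :=
    (hF₁.continuous_fderiv (by norm_num)).clm_comp continuous_const
  -- continuity of Y and Yinv
  have hYc : Continuous Y := by
    rw [continuous_iff_continuousAt]; exact fun t => (hY t).continuousAt
  have happ : ∀ t v, Y t (Yinv t v) = v := by
    intro t v
    have h := (hYinv t).1
    calc Y t (Yinv t v) = ((Y t).comp (Yinv t)) v := rfl
      _ = v := by rw [h]; rfl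
  have hYinvc : Continuous Yinv := by
    have hunit : ∀ t, Yinv t = Ring.inverse (Y t) := by
      intro t
      have h1 : Y t * Yinv t = 1 := (hYinv t).1
      have h2 : Yinv t * Y t = 1 := (hYinv t).2
      exact (Ring.inverse_unit ⟨Y t, Yinv t, h1, h2⟩).symm
    rw [continuous_iff_continuousAt]
    intro t
    have h1 : Y t * Yinv t = 1 := (hYinv t).1
    have h2 : Yinv t * Y t = 1 := (hYinv t).2
    have hinv : ContinuousAt Ring.inverse (Y t) :=
      NormedRing.inverse_continuousAt (⟨Y t, Yinv t, h1, h2⟩ : ((Fin n → ℝ) →L[ℝ] (Fin n → ℝ))ˣ)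
    have : ContinuousAt (fun s => Ring.inverse (Y s)) t := hinv.comp hYc.continuousAt
    exact this.congr (Filter.Eventually.of_forall (fun s => (hunit s).symm))
  -- the first order term y1
  have hgc : Continuous (fun s => Yinv s (F₁ s (x0 s))) :=
    hYinvc.clm_apply (hF₁.continuous.comp (continuous_id.prodMk hx0c))
  set I : ℝ → (Fin n → ℝ) := fun t => ∫ s in (0:ℝ)..t, Yinv s (F₁ s (x0 s)) with hIdef
  have hId : ∀ t, HasDerivAt I (Yinv t (F₁ t (x0 t))) t :=
    fun t => (hgc.integral_hasStrictDerivAt 0 t).hasDerivAt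
  set y1 : ℝ → (Fin n → ℝ) := fun t => Y t (I t) with hy1def
  have hy1d : ∀ t, HasDerivAt y1 (A t (x0 t) (y1 t) + F₁ t (x0 t)) t := by
    intro t
    have h := (hY t).clm_apply (hId t)
    rw [hfd t] at h
    refine h.congr_deriv ?_
    simp only [ContinuousLinearMap.comp_apply, happ]
    rfl
  have hy1c : Continuous y1 := by
    rw [continuous_iff_continuousAt]; exact fun t => (hy1d t).continuousAt
  -- compact tube
  obtain ⟨R, hR⟩ := ((isCompact_Icc.image hx0c).isBounded).subset_closedBall (0 : Fin n → ℝ)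
  set K : Set (Fin n → ℝ) := Metric.closedBall (0 : Fin n → ℝ) (|R| + 1) with hKdef
  have hKconv : Convex ℝ K := convex_closedBall _ _
  have hKcomp : IsCompact K := isCompact_closedBall _ _
  have hx0K : ∀ t ∈ Icc 0 T, x0 t ∈ K := by
    intro t ht
    have : x0 t ∈ Metric.closedBall (0 : Fin n → ℝ) R := hR ⟨t, ht, rfl⟩
    rw [Metric.mem_closedBall] at this ⊢
    have : dist (x0 t) 0 ≤ |R| := le_trans this (le_abs_self R)
    linarith
  have hx0normle : ∀ t ∈ Icc 0 T, ‖x0 t‖ ≤ |R| := by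
    intro t ht
    have : x0 t ∈ Metric.closedBall (0 : Fin n → ℝ) R := hR ⟨t, ht, rfl⟩
    rw [Metric.mem_closedBall, dist_zero_right] at this
    exact le_trans this (le_abs_self R)
  have htube : ∀ t ∈ Icc 0 T, ∀ u : Fin n → ℝ, ‖u - x0 t‖ ≤ 1 → u ∈ K := by
    intro t ht u hu
    rw [hKdef, Metric.mem_closedBall, dist_zero_right]
    calc ‖u‖ = ‖(u - x0 t) + x0 t‖ := by ring_nf
      _ ≤ ‖u - x0 t‖ + ‖x0 t‖ := norm_add_le _ _
      _ ≤ 1 + |R| := add_le_add hu (hx0normle t ht)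
      _ = |R| + 1 := by ring
  set S : Set (ℝ × (Fin n → ℝ)) := Icc (0:ℝ) T ×ˢ K with hSdef
  have hScomp : IsCompact S := isCompact_Icc.prod hKcomp
  have hSconv : Convex ℝ S := (convex_Icc _ _).prod hKconv
  -- constants
  obtain ⟨L₀, hL₀⟩ := hScomp.exists_bound_of_continuousOn hAc.continuousOn
  obtain ⟨L, hLdef⟩ : ∃ L : ℝ, L = max L₀ 1 := ⟨_, rfl⟩
  have hL1 : (1:ℝ) ≤ L := hLdef ▸ le_max_right _ _
  have hLpos : (0:ℝ) < L := zero_lt_one.trans_le hL1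
  have hLbound : ∀ t ∈ Icc (0:ℝ) T, ∀ u ∈ K, ‖A t u‖ ≤ L :=
    fun t ht u hu => le_trans (hL₀ (t, u) ⟨ht, hu⟩) (hLdef ▸ le_max_left _ _)
  have hF0lip : ∀ t ∈ Icc (0:ℝ) T, ∀ u ∈ K, ∀ v ∈ K,
      ‖F₀ t u - F₀ t v‖ ≤ L * ‖u - v‖ := by
    intro t ht u hu v hv
    exact hKconv.norm_image_sub_le_of_norm_hasFDerivWithin_le
      (fun w hw => (hAd t w).hasFDerivWithinAt)
      (fun w hw => hLbound t ht w hw) hv hu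
  obtain ⟨M₀, hM₀⟩ := hScomp.exists_bound_of_continuousOn hF₁.continuous.continuousOn
  obtain ⟨M, hMdef⟩ : ∃ M : ℝ, M = max M₀ 0 := ⟨_, rfl⟩
  have hMnonneg : (0:ℝ) ≤ M := hMdef ▸ le_max_right _ _
  have hMbound : ∀ t ∈ Icc (0:ℝ) T, ∀ u ∈ K, ‖F₁ t u‖ ≤ M :=
    fun t ht u hu => le_trans (hM₀ (t, u) ⟨ht, hu⟩) (hMdef ▸ le_max_left _ _)
  obtain ⟨L₁₀, hL₁₀⟩ := hScomp.exists_bound_of_continuousOn hBc.continuousOn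
  obtain ⟨L₁, hL₁def⟩ : ∃ L₁ : ℝ, L₁ = max L₁₀ 0 := ⟨_, rfl⟩
  have hL₁nonneg : (0:ℝ) ≤ L₁ := hL₁def ▸ le_max_right _ _
  have hF1lip : ∀ t ∈ Icc (0:ℝ) T, ∀ u ∈ K, ∀ v ∈ K,
      ‖F₁ t u - F₁ t v‖ ≤ L₁ * ‖u - v‖ := by
    intro t ht u hu v hv
    exact hKconv.norm_image_sub_le_of_norm_hasFDerivWithin_le
      (fun w hw => (hBd t w).hasFDerivWithinAt)
      (fun w hw => le_trans (hL₁₀ (t, w) ⟨ht, hw⟩) (hL₁def ▸ le_max_left _ _)) hv hu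
  -- Lipschitz estimate for A, and the second order Taylor estimate for F₀
  have hDF1 : ContDiff ℝ 1 (fderiv ℝ (fun q : ℝ × (Fin n → ℝ) => F₀ q.1 q.2)) :=
    hF₀.fderiv_right (by norm_num)
  obtain ⟨C₂₀, hC₂₀⟩ := hScomp.exists_bound_of_continuousOn
    (hDF1.continuous_fderiv (by norm_num)).continuousOn
  obtain ⟨C2, hC2def⟩ : ∃ C2 : ℝ, C2 = max C₂₀ 0 := ⟨_, rfl⟩
  have hC2nonneg : (0:ℝ) ≤ C2 := hC2def ▸ le_max_right _ _
  have hDFlip : ∀ p ∈ S, ∀ q ∈ S,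
      ‖fderiv ℝ (fun q : ℝ × (Fin n → ℝ) => F₀ q.1 q.2) p -
        fderiv ℝ (fun q : ℝ × (Fin n → ℝ) => F₀ q.1 q.2) q‖ ≤ C2 * ‖p - q‖ := by
    intro p hp q hq
    exact hSconv.norm_image_sub_le_of_norm_hasFDerivWithin_le
      (fun w _ => ((hDF1.differentiable (by norm_num)) w).hasFDerivAt.hasFDerivWithinAt)
      (fun w hw => le_trans (hC₂₀ w hw) (hC2def ▸ le_max_left _ _)) hq hp
  have hAlip : ∀ t ∈ Icc (0:ℝ) T, ∀ u ∈ K, ∀ v ∈ K,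
      ‖A t u - A t v‖ ≤ C2 * ‖u - v‖ := by
    intro t ht u hu v hv
    have h1 : A t u - A t v = (fderiv ℝ (fun q : ℝ × (Fin n → ℝ) => F₀ q.1 q.2) (t, u) -
        fderiv ℝ (fun q : ℝ × (Fin n → ℝ) => F₀ q.1 q.2) (t, v)).comp
        (ContinuousLinearMap.inr ℝ ℝ (Fin n → ℝ)) := by
      rw [ContinuousLinearMap.sub_comp]
    have h2 := hDFlip (t, u) ⟨ht, hu⟩ (t, v) ⟨ht, hv⟩
    rw [prod_sub_norm] at h2
    have h3 := ContinuousLinearMap.opNorm_comp_le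
      (fderiv ℝ (fun q : ℝ × (Fin n → ℝ) => F₀ q.1 q.2) (t, u) -
        fderiv ℝ (fun q : ℝ × (Fin n → ℝ) => F₀ q.1 q.2) (t, v))
      (ContinuousLinearMap.inr ℝ ℝ (Fin n → ℝ))
    rw [h1]
    refine le_trans h3 ?_
    calc _ ≤ (C2 * ‖u - v‖) * 1 := by
          apply mul_le_mul h2 inr_norm_le (norm_nonneg _)
          positivity
      _ = C2 * ‖u - v‖ := by ring
  have hTaylor : ∀ t ∈ Icc (0:ℝ) T, ∀ u ∈ K, ∀ v ∈ K,
      ‖F₀ t u - F₀ t v - A t v (u - v)‖ ≤ C2 * ‖u - v‖ ^ 2 := by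
    intro t ht u hu v hv
    have hseg : segment ℝ v u ⊆ K := hKconv.segment_subset hv hu
    have key : ‖(F₀ t u - A t v u) - (F₀ t v - A t v v)‖ ≤ (C2 * ‖u - v‖) * ‖u - v‖ := by
      refine (convex_segment v u).norm_image_sub_le_of_norm_hasFDerivWithin_le
        (f := fun w => F₀ t w - A t v w) (f' := fun w => A t w - A t v)
        (fun w _ => ((hAd t w).sub (A t v).hasFDerivAt).hasFDerivWithinAt)
        (fun w hw => ?_) (left_mem_segment ℝ v u) (right_mem_segment ℝ v u)
      have h1 : ‖A t w - A t v‖ ≤ C2 * ‖w - v‖ := hAlip t ht w (hseg hw) v hv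
      have h5 : (0:ℝ) ≤ dist w u := dist_nonneg
      have h4 : dist w v ≤ dist v u := by
        rw [dist_comm w v]
        linarith [dist_add_dist_of_mem_segment hw]
      have h2 : ‖w - v‖ ≤ ‖u - v‖ := by
        calc ‖w - v‖ = dist w v := (dist_eq_norm w v).symm
          _ ≤ dist v u := h4
          _ = ‖u - v‖ := by rw [dist_comm, dist_eq_norm]
      refine le_trans h1 (mul_le_mul_of_nonneg_left h2 hC2nonneg)
    have heq : (F₀ t u - A t v u) - (F₀ t v - A t v v) = F₀ t u - F₀ t v - A t v (u - v) := by
      rw [map_sub]; abel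
    rw [heq] at key
    calc ‖F₀ t u - F₀ t v - A t v (u - v)‖ ≤ (C2 * ‖u - v‖) * ‖u - v‖ := key
      _ = C2 * ‖u - v‖ ^ 2 := by ring
  -- the constants
  have hexpT : 1 ≤ Real.exp (L * T) := Real.one_le_exp (by positivity)
  obtain ⟨c₁, hc₁def⟩ : ∃ c₁ : ℝ, c₁ = (M + CG) / L * (Real.exp (L * T) - 1) := ⟨_, rfl⟩
  have hc₁nonneg : 0 ≤ c₁ := hc₁def ▸
    mul_nonneg (div_nonneg (by linarith) hLpos.le) (by linarith)
  obtain ⟨ε₂, hε₂def⟩ : ∃ ε₂ : ℝ, ε₂ = min 1 (1 / (c₁ + 1)) := ⟨_, rfl⟩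
  have hε₂pos : 0 < ε₂ := hε₂def ▸ lt_min one_pos (by positivity)
  have hε₂le1 : ε₂ ≤ 1 := hε₂def ▸ min_le_left _ _
  have hρ : c₁ * ε₂ < 1 := by
    have h1 : c₁ * ε₂ ≤ c₁ * (1 / (c₁ + 1)) :=
      mul_le_mul_of_nonneg_left (hε₂def ▸ min_le_right 1 (1 / (c₁ + 1))) hc₁nonneg
    have h2 : c₁ * (1 / (c₁ + 1)) < 1 := by
      rw [mul_one_div, div_lt_one (by linarith)]; linarith
    linarith
  obtain ⟨c₂, hc₂def⟩ : ∃ c₂ : ℝ, c₂ = C2 * c₁ ^ 2 + L₁ * c₁ + CG := ⟨_, rfl⟩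
  have hc₂nonneg : 0 ≤ c₂ := hc₂def ▸
    add_nonneg (add_nonneg (mul_nonneg hC2nonneg (sq_nonneg c₁))
      (mul_nonneg hL₁nonneg hc₁nonneg)) hCG
  obtain ⟨C, hCdef⟩ : ∃ C : ℝ, C = c₂ / L * (Real.exp (L * T) - 1) + 1 := ⟨_, rfl⟩
  have hCpos : 0 < C := by
    have h : 0 ≤ c₂ / L * (Real.exp (L * T) - 1) :=
      mul_nonneg (div_nonneg hc₂nonneg hLpos.le) (by linarith)
    rw [hCdef]; linarith
  refine ⟨C, hCpos, ε₂, hε₂pos, ?_⟩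
  intro ε hε t ht
  have hεabs1 : |ε| ≤ 1 := le_trans hε hε₂le1
  have hεsq : ε ^ 2 ≤ |ε| := by nlinarith [sq_abs ε, abs_nonneg ε]
  -- the perturbed solution and the difference e
  set xe : ℝ → (Fin n → ℝ) := fun s => x s z ε with hxedef
  have hxede : ∀ s, HasDerivAt xe (F₀ s (xe s) + ε • F₁ s (xe s) + G s (xe s) ε) s :=
    hxde z ε
  set e : ℝ → (Fin n → ℝ) := fun s => xe s - x0 s with hedef
  have hede : ∀ s, HasDerivAt e
      (F₀ s (xe s) + ε • F₁ s (xe s) + G s (xe s) ε - F₀ s (x0 s)) s :=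
    fun s => (hxede s).sub (hx0de s)
  have hec : Continuous e := by
    rw [continuous_iff_continuousAt]; exact fun s => (hede s).continuousAt
  have he0 : e 0 = 0 := by simp [hedef, hxedef, hx0def, hx0]
  -- Step A: Gronwall estimate for e, conditionally on e staying small
  have stepA : ∀ τ ∈ Icc (0:ℝ) T, (∀ s ∈ Icc (0:ℝ) τ, ‖e s‖ ≤ 1) →
      ∀ t' ∈ Icc (0:ℝ) τ, ‖e t'‖ ≤ c₁ * |ε| := by
    intro τ hτ hbd t' ht'
    have hKmem : ∀ s ∈ Icc (0:ℝ) τ, xe s ∈ K := fun s hs =>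
      htube s ⟨hs.1, le_trans hs.2 hτ.2⟩ (xe s) (hbd s hs)
    have grw := norm_le_gronwallBound_of_norm_deriv_right_le
      (f := e) (f' := fun s => F₀ s (xe s) + ε • F₁ s (xe s) + G s (xe s) ε - F₀ s (x0 s))
      (δ := 0) (K := L) (ε := (M + CG) * |ε|) (a := 0) (b := τ)
      hec.continuousOn (fun s _ => (hede s).hasDerivWithinAt)
      (by rw [he0]; simp) ?_ t' ht'
    · refine le_trans grw ?_
      rw [gronwallBound_of_K_ne_0 (ne_of_gt hLpos)]
      have ht'2 : t' ≤ τ := ht'.2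
      have ht'1 : (0:ℝ) ≤ t' := ht'.1
      have hτ2 : τ ≤ T := hτ.2
      have hexp2 : Real.exp (L * (t' - 0)) ≤ Real.exp (L * T) :=
        Real.exp_le_exp.mpr (mul_le_mul_of_nonneg_left (by linarith) hLpos.le)
      have hexp1 : 1 ≤ Real.exp (L * (t' - 0)) :=
        Real.one_le_exp (mul_nonneg hLpos.le (by linarith))
      have hMCG : (0:ℝ) ≤ (M + CG) * |ε| := mul_nonneg (by linarith) (abs_nonneg ε)
      have h1 : (M + CG) * |ε| / L * (Real.exp (L * (t' - 0)) - 1) ≤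
          (M + CG) * |ε| / L * (Real.exp (L * T) - 1) := by
        apply mul_le_mul_of_nonneg_left (by linarith) (div_nonneg hMCG hLpos.le)
      calc 0 * Real.exp (L * (t' - 0)) + (M + CG) * |ε| / L * (Real.exp (L * (t' - 0)) - 1)
          ≤ (M + CG) * |ε| / L * (Real.exp (L * T) - 1) := by linarith
        _ = c₁ * |ε| := by rw [hc₁def]; ring
    · intro s hs
      have hsIcc : s ∈ Icc (0:ℝ) τ := ⟨hs.1, hs.2.le⟩
      have hsT : s ∈ Icc (0:ℝ) T := ⟨hs.1, le_trans hs.2.le hτ.2⟩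
      have hxeK := hKmem s hsIcc
      have hx0K' := hx0K s hsT
      have hd1 : ‖F₀ s (xe s) - F₀ s (x0 s)‖ ≤ L * ‖e s‖ := hF0lip s hsT _ hxeK _ hx0K'
      have hd2 : ‖ε • F₁ s (xe s)‖ ≤ |ε| * M := by
        rw [norm_smul, Real.norm_eq_abs]
        exact mul_le_mul_of_nonneg_left (hMbound s hsT _ hxeK) (abs_nonneg ε)
      have hd3 : ‖G s (xe s) ε‖ ≤ CG * |ε| :=
        le_trans (hG s (xe s) ε) (mul_le_mul_of_nonneg_left hεsq hCG)
      have hre : F₀ s (xe s) + ε • F₁ s (xe s) + G s (xe s) ε - F₀ s (x0 s)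
          = (F₀ s (xe s) - F₀ s (x0 s)) + ε • F₁ s (xe s) + G s (xe s) ε := by abel
      calc ‖F₀ s (xe s) + ε • F₁ s (xe s) + G s (xe s) ε - F₀ s (x0 s)‖
          = ‖(F₀ s (xe s) - F₀ s (x0 s)) + ε • F₁ s (xe s) + G s (xe s) ε‖ := by rw [hre]
        _ ≤ ‖F₀ s (xe s) - F₀ s (x0 s)‖ + ‖ε • F₁ s (xe s)‖ + ‖G s (xe s) ε‖ :=
            norm_add₃_le
        _ ≤ L * ‖e s‖ + (M + CG) * |ε| := by linarith
  -- bootstrap: ‖e‖ ≤ 1 on all of [0, T]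
  have hcε1 : c₁ * |ε| < 1 := by
    have h1 : c₁ * |ε| ≤ c₁ * ε₂ := mul_le_mul_of_nonneg_left hε hc₁nonneg
    linarith
  obtain ⟨SS, hSSdef⟩ : ∃ SS : Set ℝ, ∀ τ, τ ∈ SS ↔
      (τ ∈ Icc (0:ℝ) T ∧ ∀ s ∈ Icc (0:ℝ) τ, ‖e s‖ ≤ 1) :=
    ⟨{τ | τ ∈ Icc (0:ℝ) T ∧ ∀ s ∈ Icc (0:ℝ) τ, ‖e s‖ ≤ 1}, fun τ => Iff.rfl⟩
  have h0SS : (0:ℝ) ∈ SS := by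
    refine (hSSdef 0).mpr ⟨⟨le_refl 0, hT.le⟩, fun s hs => ?_⟩
    have hs0 : s = 0 := le_antisymm hs.2 hs.1
    rw [hs0, he0]; simp
  have hSSne : SS.Nonempty := ⟨0, h0SS⟩
  have hSSbdd : BddAbove SS := ⟨T, fun τ hτ => ((hSSdef τ).mp hτ).1.2⟩
  have hτ0 : 0 ≤ sSup SS := le_csSup hSSbdd h0SS
  have hτT : sSup SS ≤ T := csSup_le hSSne fun τ' hτ' => ((hSSdef τ').mp hτ').1.2
  have hτP' : ∀ s, 0 ≤ s → s < sSup SS → ‖e s‖ ≤ 1 := by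
    intro s hs0 hsτ
    obtain ⟨τ', hτ'SS, hsτ'⟩ := exists_lt_of_lt_csSup hSSne hsτ
    exact ((hSSdef τ').mp hτ'SS).2 s ⟨hs0, hsτ'.le⟩
  have hτP : ∀ s ∈ Icc (0:ℝ) (sSup SS), ‖e s‖ ≤ 1 := by
    intro s hs
    rcases lt_or_eq_of_le hs.2 with hlt | heqs
    · exact hτP' s hs.1 hlt
    · rcases eq_or_lt_of_le hs.1 with h0s | h0s
      · rw [← h0s, he0]; simp
      · have htend : Filter.Tendsto (fun r => ‖e r‖) (nhdsWithin s (Iio s)) (nhds ‖e s‖) :=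
          (hec.norm.continuousAt.tendsto).mono_left nhdsWithin_le_nhds
        refine le_of_tendsto htend ?_
        have hmem : Ioo (0:ℝ) s ∈ nhdsWithin s (Iio s) :=
          Ioo_mem_nhdsLT_of_mem ⟨h0s, le_refl s⟩
        filter_upwards [hmem] with r hr
        exact hτP' r hr.1.le (lt_of_lt_of_le hr.2 (le_of_eq heqs))
  have hτeqT : sSup SS = T := by
    by_contra hne
    have hτlt : sSup SS < T := lt_of_le_of_ne hτT hne
    have hbound := stepA (sSup SS) ⟨hτ0, hτT⟩ hτP
    have heτ : ‖e (sSup SS)‖ < 1 :=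
      lt_of_le_of_lt (hbound (sSup SS) ⟨hτ0, le_refl _⟩) hcε1
    have hev : (fun r => ‖e r‖) ⁻¹' Iio 1 ∈ nhds (sSup SS) :=
      (hec.norm.continuousAt (x := sSup SS)).preimage_mem_nhds (Iio_mem_nhds heτ)
    obtain ⟨δ', hδ'pos, hδ'⟩ := Metric.mem_nhds_iff.mp hev
    have ht'T : min (sSup SS + δ'/2) T ≤ T := min_le_right _ _
    have ht'0 : 0 ≤ min (sSup SS + δ'/2) T := le_min (by linarith) hT.le
    have ht'SS : min (sSup SS + δ'/2) T ∈ SS := by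
      refine (hSSdef _).mpr ⟨⟨ht'0, ht'T⟩, fun s hs => ?_⟩
      rcases le_or_gt s (sSup SS) with hsle | hsgt
      · exact hτP s ⟨hs.1, hsle⟩
      · have hs2 : s ≤ sSup SS + δ'/2 := le_trans hs.2 (min_le_left _ _)
        have hball : s ∈ Metric.ball (sSup SS) δ' := by
          have hpos : (0:ℝ) < s - sSup SS := by linarith
          rw [Metric.mem_ball, Real.dist_eq, abs_of_pos hpos]
          linarith
        exact (hδ' hball).le
    have hle : min (sSup SS + δ'/2) T ≤ sSup SS := le_csSup hSSbdd ht'SS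
    have hgt : sSup SS < min (sSup SS + δ'/2) T := lt_min (by linarith) hτlt
    linarith
  have hboot : ∀ s ∈ Icc (0:ℝ) T, ‖e s‖ ≤ 1 := by rw [← hτeqT]; exact hτP
  have heb : ∀ s ∈ Icc (0:ℝ) T, ‖e s‖ ≤ c₁ * |ε| :=
    stepA T ⟨hT.le, le_refl T⟩ hboot
  have hxeKT : ∀ s ∈ Icc (0:ℝ) T, xe s ∈ K := fun s hs => htube s hs (xe s) (hboot s hs)
  -- Step B : Gronwall estimate for f = e - ε • y1
  set f : ℝ → (Fin n → ℝ) := fun s => e s - ε • y1 s with hfdef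
  have hfde : ∀ s, HasDerivAt f
      ((F₀ s (xe s) + ε • F₁ s (xe s) + G s (xe s) ε - F₀ s (x0 s)) -
        ε • (A s (x0 s) (y1 s) + F₁ s (x0 s))) s :=
    fun s => (hede s).sub ((hy1d s).const_smul ε)
  have hfc : Continuous f := by
    rw [continuous_iff_continuousAt]; exact fun s => (hfde s).continuousAt
  have hI0 : I 0 = 0 := by rw [hIdef]; simp
  have hy10 : y1 0 = 0 := by rw [hy1def]; simp only [hI0, map_zero]
  have hf0 : f 0 = 0 := by rw [hfdef]; simp only [he0, hy10, smul_zero, sub_zero]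
  have grwB := norm_le_gronwallBound_of_norm_deriv_right_le
    (f := f) (f' := fun s => (F₀ s (xe s) + ε • F₁ s (xe s) + G s (xe s) ε - F₀ s (x0 s)) -
        ε • (A s (x0 s) (y1 s) + F₁ s (x0 s)))
    (δ := 0) (K := L) (ε := c₂ * ε ^ 2) (a := 0) (b := T)
    hfc.continuousOn (fun s _ => (hfde s).hasDerivWithinAt)
    (by rw [hf0]; simp) ?_ t ht
  · -- conclusion
    have hgb : gronwallBound 0 L (c₂ * ε ^ 2) (t - 0) ≤ C * ε ^ 2 := by
      rw [gronwallBound_of_K_ne_0 (ne_of_gt hLpos)]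
      have ht1 : (0:ℝ) ≤ t := ht.1
      have ht2 : t ≤ T := ht.2
      have hexp2 : Real.exp (L * (t - 0)) ≤ Real.exp (L * T) :=
        Real.exp_le_exp.mpr (mul_le_mul_of_nonneg_left (by linarith) hLpos.le)
      have hexp1 : 1 ≤ Real.exp (L * (t - 0)) :=
        Real.one_le_exp (mul_nonneg hLpos.le (by linarith))
      have hnn : 0 ≤ c₂ * ε ^ 2 := mul_nonneg hc₂nonneg (sq_nonneg ε)
      have h1 : c₂ * ε ^ 2 / L * (Real.exp (L * (t - 0)) - 1) ≤
          c₂ * ε ^ 2 / L * (Real.exp (L * T) - 1) :=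
        mul_le_mul_of_nonneg_left (by linarith) (div_nonneg hnn hLpos.le)
      have h2 : c₂ * ε ^ 2 / L * (Real.exp (L * T) - 1)
          = (c₂ / L * (Real.exp (L * T) - 1)) * ε ^ 2 := by ring
      have h3 : (0:ℝ) ≤ ε ^ 2 := sq_nonneg ε
      rw [hCdef]
      calc (0:ℝ) * Real.exp (L * (t - 0)) + c₂ * ε ^ 2 / L * (Real.exp (L * (t - 0)) - 1)
          ≤ (c₂ / L * (Real.exp (L * T) - 1)) * ε ^ 2 := by linarith
        _ ≤ (c₂ / L * (Real.exp (L * T) - 1) + 1) * ε ^ 2 := by nlinarith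
    have hft : x t z ε - x t z 0 -
        ε • (Y t) (∫ s in (0:ℝ)..t, (Yinv s) (F₁ s (x s z 0))) = f t := by
      rw [hfdef, hedef, hxedef, hx0def, hy1def, hIdef]
    rw [hft]
    exact le_trans grwB hgb
  · intro s hs
    have hsT : s ∈ Icc (0:ℝ) T := ⟨hs.1, hs.2.le⟩
    have hxeK := hxeKT s hsT
    have hx0K' := hx0K s hsT
    have hfs : f s = e s - ε • y1 s := by rw [hfdef]
    have he' : xe s - x0 s = e s := by rw [hedef]
    have hrw : (F₀ s (xe s) + ε • F₁ s (xe s) + G s (xe s) ε - F₀ s (x0 s)) -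
        ε • (A s (x0 s) (y1 s) + F₁ s (x0 s))
        = A s (x0 s) (f s) + ((F₀ s (xe s) - F₀ s (x0 s) - A s (x0 s) (e s))
            + ε • (F₁ s (xe s) - F₁ s (x0 s)) + G s (xe s) ε) := by
      rw [hfs]
      simp only [map_sub, map_smul, smul_add, smul_sub]
      abel
    show ‖F₀ s (xe s) + ε • F₁ s (xe s) + G s (xe s) ε - F₀ s (x0 s) -
        ε • ((A s (x0 s)) (y1 s) + F₁ s (x0 s))‖ ≤ L * ‖f s‖ + c₂ * ε ^ 2
    rw [hrw]
    have hes : ‖e s‖ ≤ c₁ * |ε| := heb s hsT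
    have hb1 : ‖A s (x0 s) (f s)‖ ≤ L * ‖f s‖ :=
      le_trans ((A s (x0 s)).le_opNorm (f s))
        (mul_le_mul_of_nonneg_right (hLbound s hsT _ hx0K') (norm_nonneg _))
    have hb2 : ‖F₀ s (xe s) - F₀ s (x0 s) - A s (x0 s) (e s)‖ ≤ C2 * c₁ ^ 2 * ε ^ 2 := by
      have h := hTaylor s hsT (xe s) hxeK (x0 s) hx0K'
      rw [he'] at h
      refine le_trans h ?_
      have hsq : ‖e s‖ ^ 2 ≤ (c₁ * |ε|) ^ 2 := by nlinarith [norm_nonneg (e s)]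
      have : (c₁ * |ε|) ^ 2 = c₁ ^ 2 * ε ^ 2 := by rw [mul_pow, sq_abs]
      calc C2 * ‖e s‖ ^ 2 ≤ C2 * (c₁ * |ε|) ^ 2 := mul_le_mul_of_nonneg_left hsq hC2nonneg
        _ = C2 * c₁ ^ 2 * ε ^ 2 := by rw [this]; ring
    have hb3 : ‖ε • (F₁ s (xe s) - F₁ s (x0 s))‖ ≤ L₁ * c₁ * ε ^ 2 := by
      rw [norm_smul, Real.norm_eq_abs]
      have h := hF1lip s hsT (xe s) hxeK (x0 s) hx0K'
      rw [he'] at h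
      calc |ε| * ‖F₁ s (xe s) - F₁ s (x0 s)‖ ≤ |ε| * (L₁ * (c₁ * |ε|)) := by
            refine mul_le_mul_of_nonneg_left ?_ (abs_nonneg ε)
            exact le_trans h (mul_le_mul_of_nonneg_left hes hL₁nonneg)
        _ = L₁ * c₁ * (|ε| * |ε|) := by ring
        _ = L₁ * c₁ * ε ^ 2 := by rw [← sq_abs]; ring
    have hb4 : ‖G s (xe s) ε‖ ≤ CG * ε ^ 2 := hG s (xe s) ε
    calc ‖A s (x0 s) (f s) + ((F₀ s (xe s) - F₀ s (x0 s) - A s (x0 s) (e s))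
            + ε • (F₁ s (xe s) - F₁ s (x0 s)) + G s (xe s) ε)‖
        ≤ ‖A s (x0 s) (f s)‖ + ‖(F₀ s (xe s) - F₀ s (x0 s) - A s (x0 s) (e s))
            + ε • (F₁ s (xe s) - F₁ s (x0 s)) + G s (xe s) ε‖ := norm_add_le _ _
      _ ≤ ‖A s (x0 s) (f s)‖ + (‖F₀ s (xe s) - F₀ s (x0 s) - A s (x0 s) (e s)‖
            + ‖ε • (F₁ s (xe s) - F₁ s (x0 s))‖ + ‖G s (xe s) ε‖) := by
          linarith [norm_add₃_le (E := Fin n → ℝ)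
            (a := F₀ s (xe s) - F₀ s (x0 s) - A s (x0 s) (e s))
            (b := ε • (F₁ s (xe s) - F₁ s (x0 s))) (c := G s (xe s) ε)]
      _ ≤ L * ‖f s‖ + c₂ * ε ^ 2 := by rw [hc₂def]; nlinarith [sq_nonneg ε]
end

section
/- Let x(t,z,ε) be the solution of the T-periodic system \eqref{s1} with x(0,z,ε) = z and let Y(t,z) be a fundamental matrix of the variational equation along x(t,z,0). Define g(z,ε) = Y(T,z)^{-1}(x(T,z,ε) - z). Then the zero-order term g₀(z) = Y(T,z)^{-1}(x(T,z,0) - z) satisfies (∂g₀/∂z)(z) = Y(0,z)^{-1} - Y(T,z)^{-1} at every z for which the solution x(·,z,0) is T-periodic. -/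
open Set

/-- The function `g₀(z) = Y(T,z)⁻¹ (x(T,z,0) - z)` satisfies
`(∂g₀/∂z)(z) = Y(0,z)⁻¹ - Y(T,z)⁻¹` at every point `z` where the unperturbed
solution is `T`-periodic, using `(∂x/∂z)(T,z,0) = Y(T,z) Y(0,z)⁻¹`. -/
theorem derivative_of_g0_on_periodic_manifold
    (n : ℕ) (T : ℝ) (hT : 0 < T)
    (F₀ : ℝ → (Fin n → ℝ) → (Fin n → ℝ))
    (x : ℝ → (Fin n → ℝ) → (Fin n → ℝ))
    (hx0 : ∀ z, x 0 z = z)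
    (hxde : ∀ z t, HasDerivAt (fun s => x s z) (F₀ t (x t z)) t)
    (Y Yinv : (Fin n → ℝ) → ℝ → (Fin n → ℝ) →L[ℝ] (Fin n → ℝ))
    (hYinv : ∀ z t, (Y z t).comp (Yinv z t) = ContinuousLinearMap.id ℝ (Fin n → ℝ) ∧
      (Yinv z t).comp (Y z t) = ContinuousLinearMap.id ℝ (Fin n → ℝ))
    (g₀ : (Fin n → ℝ) → (Fin n → ℝ))
    (hg₀ : ∀ z, g₀ z = (Yinv z T) (x T z - z))
    (zb : Fin n → ℝ) (hper : x T zb = zb)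
    (hflow : HasFDerivAt (fun z => x T z) ((Y zb T).comp (Yinv zb 0)) zb)
    (hYd : DifferentiableAt ℝ (fun z => Yinv z T) zb) :
    HasFDerivAt g₀ (Yinv zb 0 - Yinv zb T) zb := by
  have hu : HasFDerivAt (fun z => x T z - z)
      ((Y zb T).comp (Yinv zb 0) - ContinuousLinearMap.id ℝ (Fin n → ℝ)) zb :=
    hflow.sub (hasFDerivAt_id zb)
  have hc := hYd.hasFDerivAt
  have h := hc.clm_apply hu
  have hfun : g₀ = fun z => (Yinv z T) (x T z - z) := funext hg₀
  rw [hfun]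
  refine h.congr_fderiv ?_
  have hzero : x T zb - zb = 0 := by simp [hper]
  have hkey : ∀ v, (Yinv zb T) ((Y zb T) ((Yinv zb 0) v)) = (Yinv zb 0) v := by
    intro v
    have := congrArg (fun L => L ((Yinv zb 0) v)) (hYinv zb T).2
    simpa using this
  ext v
  simp [hzero, ContinuousLinearMap.comp_apply, ContinuousLinearMap.sub_apply,
    map_sub, hkey]
end
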